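/- For every S ⊆ B, −⟨ψ| 1_S H 1_{B∖S} |ψ⟩ ≤ (‖H‖ − E₀)·π(∂S), i.e. ∑_{x∈S, y∈B∖S} conj(ψ_x) (‖H‖·δ_{xy} − H_{xy}) ψ_y ≤ (‖H‖ − E₀)·π(∂S). -/

import Mathlib

open scoped BigOperators ComplexOrder

/-- The ℓ²-operator norm of a matrix over ℂ. -/
noncomputable def opNorm {B : Type*} [Fintype B] [DecidableEq B] (H : Matrix B B ℂ) : ℝ :=
  ‖Matrix.toEuclideanCLM (𝕜 := ℂ) H‖

/-- The ground-state probability measure of a subset `S`. -/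
noncomputable def piS {B : Type*} (ψ : B → ℂ) (S : Finset B) : ℝ :=
  ∑ z ∈ S, ‖ψ z‖ ^ 2

open scoped Classical in
/-- The interior boundary `∂S` of the set `S` with respect to the matrix `H`. -/
noncomputable def bdry {B : Type*} [Fintype B] (H : Matrix B B ℂ) (S : Finset B) : Finset B :=
  S.filter (fun x => ∃ y ∉ S, H x y ≠ 0)

open scoped Matrix

/-- Membership in the boundary. -/
lemma aux_mem_bdry {B : Type*} [Fintype B] (H : Matrix B B ℂ) (S : Finset B) (x : B) :
    x ∈ bdry H S ↔ x ∈ S ∧ ∃ y ∉ S, H x y ≠ 0 := by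
  classical
  constructor
  · intro hx
    exact ⟨Finset.mem_of_mem_filter x hx, (Finset.mem_filter.mp hx).2⟩
  · intro hx
    exact Finset.mem_filter.mpr hx

/-- `H - E₀ • 1` is positive semidefinite when every eigenvalue of `H` is at least `E₀`. -/
lemma aux_psd {B : Type*} [Fintype B] [DecidableEq B]
    (H : Matrix B B ℂ) (hH : H.IsHermitian) (E₀ : ℝ)
    (hleast : ∀ i, E₀ ≤ hH.eigenvalues i) :
    (H - (E₀ : ℂ) • 1).PosSemidef := by
  have hU : (hH.eigenvectorUnitary : Matrix B B ℂ) * star (hH.eigenvectorUnitary : Matrix B B ℂ)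
      = 1 := Matrix.mem_unitaryGroup_iff.mp hH.eigenvectorUnitary.2
  have hdiag : Matrix.diagonal (fun i => ((hH.eigenvalues i - E₀ : ℝ) : ℂ))
      = Matrix.diagonal (RCLike.ofReal ∘ hH.eigenvalues) - (E₀ : ℂ) • 1 := by
    ext i j
    by_cases h : i = j <;>
      simp [h, Matrix.diagonal_apply, Matrix.one_apply, Complex.ofReal_sub]
  have h1 : H - (E₀ : ℂ) • 1 =
      (hH.eigenvectorUnitary : Matrix B B ℂ)
        * Matrix.diagonal (fun i => ((hH.eigenvalues i - E₀ : ℝ) : ℂ))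
        * (hH.eigenvectorUnitary : Matrix B B ℂ)ᴴ := by
    rw [hdiag, Matrix.mul_sub, Matrix.sub_mul, Matrix.mul_smul, Matrix.mul_one,
      Matrix.smul_mul, ← Matrix.star_eq_conjTranspose, hU]
    exact congrArg (fun M => M - (E₀ : ℂ) • 1) hH.spectral_theorem
  rw [h1]
  refine Matrix.PosSemidef.mul_mul_conjTranspose_same ?_ _
  refine Matrix.posSemidef_diagonal_iff.mpr fun i => ?_
  rw [Complex.zero_le_real]
  exact sub_nonneg.mpr (hleast i)

/-- Symmetry of the sesquilinear form of a Hermitian matrix. -/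
lemma aux_sym {B : Type*} [Fintype B] (H : Matrix B B ℂ) (hH : H.IsHermitian) (a b : B → ℂ) :
    ∑ x, ∑ y, (starRingEnd ℂ) (a x) * H x y * b y
      = (starRingEnd ℂ) (∑ x, ∑ y, (starRingEnd ℂ) (b x) * H x y * a y) := by
  have hHe : ∀ x y, (starRingEnd ℂ) (H x y) = H y x := by
    intro x y
    exact hH.apply y x
  refine Eq.trans Finset.sum_comm ?_
  rw [map_sum]
  refine Finset.sum_congr rfl fun x _ => ?_
  rw [map_sum]
  refine Finset.sum_congr rfl fun y _ => ?_
  simp only [map_mul, Complex.conj_conj, hHe]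
  ring

/-- The eigenvalue equation, in sum form. -/
lemma aux_eig {B : Type*} [Fintype B] (H : Matrix B B ℂ) (E₀ : ℝ) (ψ : B → ℂ)
    (hground : H.mulVec ψ = (E₀ : ℂ) • ψ) (a : B → ℂ) :
    ∑ x, ∑ y, (starRingEnd ℂ) (a x) * H x y * ψ y
      = (E₀ : ℂ) * ∑ x, (starRingEnd ℂ) (a x) * ψ x := by
  have hx : ∀ x, ∑ y, H x y * ψ y = (E₀ : ℂ) * ψ x := by
    intro x
    have := congrFun hground x
    simpa [Matrix.mulVec, dotProduct] using this
  calc ∑ x, ∑ y, (starRingEnd ℂ) (a x) * H x y * ψ y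
      = ∑ x, (starRingEnd ℂ) (a x) * ∑ y, H x y * ψ y := by
        simp [Finset.mul_sum, mul_assoc]
    _ = ∑ x, (starRingEnd ℂ) (a x) * ((E₀ : ℂ) * ψ x) := by
        refine Finset.sum_congr rfl fun x _ => ?_; rw [hx]
    _ = (E₀ : ℂ) * ∑ x, (starRingEnd ℂ) (a x) * ψ x := by
        rw [Finset.mul_sum]; exact Finset.sum_congr rfl fun x _ => by ring

/-- The quadratic form of `H - E₀ • 1`, in sum form. -/
lemma aux_mdot {B : Type*} [Fintype B] [DecidableEq B] (H : Matrix B B ℂ) (E₀ : ℝ) (u : B → ℂ) :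
    dotProduct (star u) ((H - (E₀ : ℂ) • 1) *ᵥ u)
      = (∑ x, ∑ y, (starRingEnd ℂ) (u x) * H x y * u y)
        - (E₀ : ℂ) * ∑ x, (starRingEnd ℂ) (u x) * u x := by
  rw [Matrix.sub_mulVec, dotProduct_sub, Matrix.smul_mulVec,
    Matrix.one_mulVec, dotProduct_smul]
  congr 1
  simp [dotProduct, Matrix.mulVec, Finset.mul_sum, mul_assoc, Complex.star_def]

theorem stmt_6 {B : Type*} [Fintype B] [DecidableEq B]
    (H : Matrix B B ℂ) (hH : H.IsHermitian)
    -- `ψ` is a unit-norm eigenvector for the smallest eigenvalue `E₀`: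
    (E₀ : ℝ) (ψ : B → ℂ) (hψnorm : ∑ z, ‖ψ z‖ ^ 2 = 1)
    (hground : H.mulVec ψ = (E₀ : ℂ) • ψ)
    (hleast : ∀ i, E₀ ≤ hH.eigenvalues i)
    (S : Finset B) :
    (∑ x ∈ S, ∑ y ∈ Sᶜ,
        (starRingEnd ℂ) (ψ x) * ((opNorm H : ℂ) * (if x = y then 1 else 0) - H x y) * ψ y).re ≤
      (opNorm H - E₀) * piS ψ (bdry H S) := by
  classical
  set c : ℝ := opNorm H with hc
  set p : ℝ := piS ψ (bdry H S) with hp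
  set f : B → ℂ := fun x => if x ∈ S then ψ x else 0 with hf
  set g : B → ℂ := fun x => if x ∈ S then 0 else ψ x with hg
  set v : B → ℂ := fun x => if x ∈ bdry H S then ψ x else 0 with hv
  have hbS : bdry H S ⊆ S := fun z hz => ((aux_mem_bdry H S z).mp hz).1
  have hbdry : ∀ x, x ∈ S → x ∉ bdry H S → ∀ y, y ∉ S → H x y = 0 := by
    intro x hxS hxb y hyS
    by_contra h
    exact hxb ((aux_mem_bdry H S x).mpr ⟨hxS, ⟨y, hyS, h⟩⟩)
  -- Step 1 : the LHS equals -(Q f g)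
  have h1 : (∑ x ∈ S, ∑ y ∈ Sᶜ,
        (starRingEnd ℂ) (ψ x) * ((c : ℂ) * (if x = y then 1 else 0) - H x y) * ψ y)
      = -(∑ x, ∑ y, (starRingEnd ℂ) (f x) * H x y * g y) := by
    have e1 : (∑ x ∈ S, ∑ y ∈ Sᶜ,
          (starRingEnd ℂ) (ψ x) * ((c : ℂ) * (if x = y then 1 else 0) - H x y) * ψ y)
        = ∑ x ∈ S, ∑ y ∈ Sᶜ, -((starRingEnd ℂ) (f x) * H x y * g y) := by
      refine Finset.sum_congr rfl fun x hx => Finset.sum_congr rfl fun y hy => ?_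
      have hyS : y ∉ S := Finset.mem_compl.mp hy
      have hxy : x ≠ y := fun h => hyS (h ▸ hx)
      rw [if_neg hxy]
      simp only [hf, hg, if_pos hx, if_neg hyS]
      ring
    have e2 : ∀ x, (∑ y ∈ Sᶜ, (starRingEnd ℂ) (f x) * H x y * g y)
        = ∑ y, (starRingEnd ℂ) (f x) * H x y * g y := by
      intro x
      refine Finset.sum_subset (Finset.subset_univ _) fun y _ hy => ?_
      have hyS : y ∈ S := by simpa using hy
      simp [hg, hyS]
    have e3 : (∑ x ∈ S, ∑ y, (starRingEnd ℂ) (f x) * H x y * g y)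
        = ∑ x, ∑ y, (starRingEnd ℂ) (f x) * H x y * g y := by
      refine Finset.sum_subset (Finset.subset_univ _) fun x _ hx => ?_
      exact Finset.sum_eq_zero fun y _ => by simp [hf, hx]
    calc (∑ x ∈ S, ∑ y ∈ Sᶜ,
          (starRingEnd ℂ) (ψ x) * ((c : ℂ) * (if x = y then 1 else 0) - H x y) * ψ y)
        = ∑ x ∈ S, ∑ y ∈ Sᶜ, -((starRingEnd ℂ) (f x) * H x y * g y) := e1
      _ = -(∑ x ∈ S, ∑ y ∈ Sᶜ, (starRingEnd ℂ) (f x) * H x y * g y) := by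
          simp [Finset.sum_neg_distrib]
      _ = -(∑ x, ∑ y, (starRingEnd ℂ) (f x) * H x y * g y) := by
          rw [show (∑ x ∈ S, ∑ y ∈ Sᶜ, (starRingEnd ℂ) (f x) * H x y * g y)
              = ∑ x ∈ S, ∑ y, (starRingEnd ℂ) (f x) * H x y * g y from
            Finset.sum_congr rfl fun x _ => e2 x, e3]
  -- Step 2 : Q f g = Q v g
  have h2 : (∑ x, ∑ y, (starRingEnd ℂ) (f x) * H x y * g y)
      = ∑ x, ∑ y, (starRingEnd ℂ) (v x) * H x y * g y := by
    refine Finset.sum_congr rfl fun x _ => ?_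
    by_cases hxS : x ∈ S
    · by_cases hxb : x ∈ bdry H S
      · simp [hf, hv, hxS, hxb]
      · refine Finset.sum_congr rfl fun y _ => ?_
        by_cases hyS : y ∈ S
        · simp [hv, hxb, hg, hyS]
        · have h0 : H x y = 0 := hbdry x hxS hxb y hyS
          simp [h0, hv, hxb]
    · have hxb : x ∉ bdry H S := fun h => hxS (hbS h)
      simp [hf, hv, hxS, hxb]
  -- pointwise decomposition ψ = f + g
  have hfg : ∀ z, ψ z = f z + g z := by
    intro z
    by_cases h : z ∈ S <;> simp [hf, hg, h]
  -- orthogonality relations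
  have hEvg : (∑ x, (starRingEnd ℂ) (v x) * g x) = 0 := by
    refine Finset.sum_eq_zero fun x _ => ?_
    by_cases h : x ∈ S
    · simp [hg, h]
    · have hxb : x ∉ bdry H S := fun hb => h (hbS hb)
      simp [hv, hxb]
  have hEgv : (∑ x, (starRingEnd ℂ) (g x) * v x) = 0 := by
    refine Finset.sum_eq_zero fun x _ => ?_
    by_cases h : x ∈ S
    · simp [hg, h]
    · have hxb : x ∉ bdry H S := fun hb => h (hbS hb)
      simp [hv, hxb]
  have hEgf : (∑ x, (starRingEnd ℂ) (g x) * f x) = 0 := by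
    refine Finset.sum_eq_zero fun x _ => ?_
    by_cases h : x ∈ S <;> simp [hf, hg, h]
  have hEvv : (∑ x, (starRingEnd ℂ) (v x) * v x) = (p : ℂ) := by
    rw [hp, piS]
    push_cast
    rw [← Finset.sum_subset (Finset.subset_univ (bdry H S))
      (fun x _ hx => by simp [hv, hx])]
    refine Finset.sum_congr rfl fun x hx => ?_
    simp only [hv, if_pos hx]
    rw [mul_comm, Complex.mul_conj]
    simp [Complex.normSq_eq_norm_sq]
  -- eigen-equation split : Q g f + Q g g = E₀ * E g g
  have hQgg : (∑ x, ∑ y, (starRingEnd ℂ) (g x) * H x y * g y)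
      = (E₀ : ℂ) * (∑ x, (starRingEnd ℂ) (g x) * g x)
        - (∑ x, ∑ y, (starRingEnd ℂ) (g x) * H x y * f y) := by
    have he := aux_eig H E₀ ψ hground g
    have hsplitQ : (∑ x, ∑ y, (starRingEnd ℂ) (g x) * H x y * ψ y)
        = (∑ x, ∑ y, (starRingEnd ℂ) (g x) * H x y * f y)
          + ∑ x, ∑ y, (starRingEnd ℂ) (g x) * H x y * g y := by
      rw [← Finset.sum_add_distrib]
      refine Finset.sum_congr rfl fun x _ => ?_
      rw [← Finset.sum_add_distrib]
      refine Finset.sum_congr rfl fun y _ => ?_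
      rw [hfg y]; ring
    have hsplitE : (∑ x, (starRingEnd ℂ) (g x) * ψ x)
        = (∑ x, (starRingEnd ℂ) (g x) * f x) + ∑ x, (starRingEnd ℂ) (g x) * g x := by
      rw [← Finset.sum_add_distrib]
      refine Finset.sum_congr rfl fun x _ => ?_
      rw [hfg x]; ring
    rw [hsplitQ, hsplitE, hEgf, zero_add] at he
    linear_combination he
  -- positivity of the quadratic form at v + g
  have hpsd0 := (aux_psd H hH E₀ hleast).dotProduct_mulVec_nonneg (fun z => v z + g z)
  rw [aux_mdot] at hpsd0
  -- expand the quadratic form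
  have hexpQ : (∑ x, ∑ y, (starRingEnd ℂ) ((fun z => v z + g z) x) * H x y
        * ((fun z => v z + g z) y))
      = (∑ x, ∑ y, (starRingEnd ℂ) (v x) * H x y * v y)
        + (∑ x, ∑ y, (starRingEnd ℂ) (v x) * H x y * g y)
        + ((∑ x, ∑ y, (starRingEnd ℂ) (g x) * H x y * v y)
          + ∑ x, ∑ y, (starRingEnd ℂ) (g x) * H x y * g y) := by
    rw [← Finset.sum_add_distrib, ← Finset.sum_add_distrib, ← Finset.sum_add_distrib]
    refine Finset.sum_congr rfl fun x _ => ?_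
    rw [← Finset.sum_add_distrib, ← Finset.sum_add_distrib, ← Finset.sum_add_distrib]
    refine Finset.sum_congr rfl fun y _ => ?_
    simp only [map_add]
    ring
  have hexpE : (∑ x, (starRingEnd ℂ) ((fun z => v z + g z) x) * ((fun z => v z + g z) x))
      = (∑ x, (starRingEnd ℂ) (v x) * v x)
        + (∑ x, (starRingEnd ℂ) (v x) * g x)
        + ((∑ x, (starRingEnd ℂ) (g x) * v x)
          + ∑ x, (starRingEnd ℂ) (g x) * g x) := by
    rw [← Finset.sum_add_distrib, ← Finset.sum_add_distrib, ← Finset.sum_add_distrib]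
    refine Finset.sum_congr rfl fun x _ => ?_
    simp only [map_add]
    ring
  rw [hexpQ, hexpE, hEvg, hEgv, hEvv, hQgg] at hpsd0
  -- symmetry facts
  have hsymgv : (∑ x, ∑ y, (starRingEnd ℂ) (g x) * H x y * v y)
      = (starRingEnd ℂ) (∑ x, ∑ y, (starRingEnd ℂ) (v x) * H x y * g y) :=
    aux_sym H hH g v
  have hsymgf : (∑ x, ∑ y, (starRingEnd ℂ) (g x) * H x y * f y)
      = (starRingEnd ℂ) (∑ x, ∑ y, (starRingEnd ℂ) (f x) * H x y * g y) :=
    aux_sym H hH g f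
  rw [hsymgv, hsymgf, ← h2] at hpsd0
  -- now hpsd0 : 0 ≤ Qvv + Qfg + (conj Qfg + (E₀ Egg - conj Qfg)) - E₀ (p + 0 + (0 + Egg))
  set Qvv : ℂ := ∑ x, ∑ y, (starRingEnd ℂ) (v x) * H x y * v y with hQvv
  set Qfg : ℂ := ∑ x, ∑ y, (starRingEnd ℂ) (f x) * H x y * g y with hQfg
  set Egg : ℂ := ∑ x, (starRingEnd ℂ) (g x) * g x with hEgg
  have hkey : Qvv + Qfg + ((starRingEnd ℂ) Qfg + ((E₀ : ℂ) * Egg - (starRingEnd ℂ) Qfg))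
      - (E₀ : ℂ) * ((p : ℂ) + 0 + (0 + Egg)) = Qvv + Qfg - (E₀ : ℂ) * (p : ℂ) := by
    ring
  rw [hkey] at hpsd0
  have hre : 0 ≤ Qvv.re + Qfg.re - E₀ * p := by
    have := (Complex.le_def.mp hpsd0).1
    simpa [Complex.add_re, Complex.sub_re, Complex.ofReal_re, Complex.zero_re,
      Complex.mul_re, Complex.ofReal_im] using this
  -- the operator norm bound : Qvv.re ≤ c * p
  have hnorm : Qvv.re ≤ c * p := by
    set V : EuclideanSpace ℂ B := (WithLp.equiv 2 (B → ℂ)).symm v with hV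
    have hinner : (inner ℂ V ((Matrix.toEuclideanCLM (𝕜 := ℂ) H) V) : ℂ) = Qvv := by
      rw [hV, WithLp.equiv_symm_apply, Matrix.toEuclideanCLM_toLp,
        EuclideanSpace.inner_toLp_toLp, hQvv]
      simp [dotProduct, Matrix.mulVec, Finset.mul_sum, mul_assoc, Complex.star_def]
      exact Finset.sum_congr rfl fun x _ => by
        rw [Finset.sum_mul]; exact Finset.sum_congr rfl fun y _ => by ring
    have hnormV : ‖V‖ ^ 2 = p := by
      rw [EuclideanSpace.norm_eq, Real.sq_sqrt (Finset.sum_nonneg fun i _ => by positivity)]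
      rw [hp, piS]
      rw [← Finset.sum_subset (Finset.subset_univ (bdry H S))
        (fun x _ hx => by simp [hV, hv, hx])]
      refine Finset.sum_congr rfl fun x hx => ?_
      simp [hV, hv, hx]
    have hVnonneg : (0 : ℝ) ≤ ‖V‖ := norm_nonneg _
    calc Qvv.re = (inner ℂ V ((Matrix.toEuclideanCLM (𝕜 := ℂ) H) V) : ℂ).re := by rw [hinner]
      _ ≤ ‖(inner ℂ V ((Matrix.toEuclideanCLM (𝕜 := ℂ) H) V) : ℂ)‖ :=
          Complex.re_le_norm _
      _ = ‖(inner ℂ V ((Matrix.toEuclideanCLM (𝕜 := ℂ) H) V) : ℂ)‖ := rfl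
      _ ≤ ‖V‖ * ‖(Matrix.toEuclideanCLM (𝕜 := ℂ) H) V‖ := norm_inner_le_norm _ _
      _ ≤ ‖V‖ * (‖Matrix.toEuclideanCLM (𝕜 := ℂ) H‖ * ‖V‖) := by
          exact mul_le_mul_of_nonneg_left
            ((Matrix.toEuclideanCLM (𝕜 := ℂ) H).le_opNorm V) hVnonneg
      _ = c * p := by rw [hc]; rw [opNorm]; rw [← hnormV]; ring
  -- conclude
  rw [h1, Complex.neg_re]
  nlinarith [hre, hnorm]
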